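/- Let ℍ be the Hilbert cube, and let H ⊆ K(ℍ²) be the set of compact subsets of ℍ × ℍ that are graphs of homeomorphisms between compact subsets of ℍ. Then H is a Borel subset of K(ℍ²). -/

import Mathlib

open TopologicalSpace MeasureTheory

attribute [local instance] PiCountable.metricSpace

/-- The Hilbert cube `[0,1]^ℕ`. -/
abbrev Hcube : Type := ℕ → unitInterval

noncomputable local instance : MeasurableSpace Hcube := borel Hcube
local instance : BorelSpace Hcube := ⟨rfl⟩
noncomputable local instance : MeasurableSpace (NonemptyCompacts (Hcube × Hcube)) :=
  borel _
local instance : BorelSpace (NonemptyCompacts (Hcube × Hcube)) := ⟨rfl⟩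

/-- `C ⊆ ℍ × ℍ` is the graph of a homeomorphism between compact subsets of `ℍ`. -/
def IsHomeoGraph (C : Set (Hcube × Hcube)) : Prop :=
  ∃ K L : Set Hcube, IsCompact K ∧ IsCompact L ∧ ∃ φ : K ≃ₜ L,
    C = Set.range fun k : K => ((k : Hcube), (φ k : Hcube))

open Filter Metric in
/-- If `C k → D` in the hyperspace and `p k ∈ C k` with `p k → q`, then `q ∈ D`. -/
lemma mem_of_tendsto_nc {X : Type*} [MetricSpace X] {C : ℕ → NonemptyCompacts X}
    {D : NonemptyCompacts X} (hC : Tendsto C atTop (nhds D))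
    {p : ℕ → X} (hp : ∀ k, p k ∈ (C k : Set X)) {q : X}
    (hq : Tendsto p atTop (nhds q)) : q ∈ (D : Set X) := by
  have hd : Tendsto (fun k => dist (C k) D) atTop (nhds 0) :=
    tendsto_iff_dist_tendsto_zero.mp hC
  have key : ∀ k, infDist q (D : Set X) ≤ dist q (p k) + dist (C k) D := by
    intro k
    have fin : EMetric.hausdorffEdist ((C k : Set X)) (D : Set X) ≠ ⊤ :=
      hausdorffEdist_ne_top_of_nonempty_of_bounded (C k).nonempty D.nonempty
        (C k).isCompact.isBounded D.isCompact.isBounded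
    calc infDist q (D : Set X) ≤ infDist (p k) (D : Set X) + dist q (p k) :=
          infDist_le_infDist_add_dist
      _ ≤ hausdorffDist ((C k : Set X)) (D : Set X) + dist q (p k) :=
          add_le_add_left (infDist_le_hausdorffDist_of_mem (hp k) fin) _
      _ = dist q (p k) + dist (C k) D := by rw [NonemptyCompacts.dist_eq]; ring
  have hlim : Tendsto (fun k => dist q (p k) + dist (C k) D) atTop (nhds 0) := by
    have h1 : Tendsto (fun k => dist q (p k)) atTop (nhds 0) := by
      have := (tendsto_const_nhds (x := q) (f := atTop (α := ℕ))).dist hq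
      simpa using this
    simpa using h1.add hd
  have h0 : infDist q (D : Set X) ≤ 0 := ge_of_tendsto hlim (Filter.Eventually.of_forall key)
  have h0' : infDist q (D : Set X) = 0 := le_antisymm h0 infDist_nonneg
  exact (D.isCompact.isClosed.mem_iff_infDist_zero D.nonempty).mpr h0'

open Filter Metric in
/-- The set of compact sets containing two `ε`-separated points identified by a continuous
map `f` is closed. -/
lemma isClosed_bad {X Z : Type*} [MetricSpace X] [CompactSpace X] [TopologicalSpace Z]
    [T2Space Z] (f : X → Z) (hf : Continuous f) (ε : ℝ) :
    IsClosed {C : NonemptyCompacts X |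
      ∃ p ∈ (C : Set X), ∃ q ∈ (C : Set X), f p = f q ∧ ε ≤ dist p q} := by
  refine IsSeqClosed.isClosed ?_
  intro C D hmem hC
  choose p hp q hq hfe hd using hmem
  obtain ⟨⟨a, b⟩, -, ψ, hψ, hab⟩ := (isCompact_univ (X := X × X)).tendsto_subseq
    (x := fun k => (p k, q k)) (fun k => Set.mem_univ _)
  have ha : Tendsto (fun k => p (ψ k)) atTop (nhds a) :=
    (continuous_fst.tendsto _).comp hab
  have hb : Tendsto (fun k => q (ψ k)) atTop (nhds b) :=
    (continuous_snd.tendsto _).comp hab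
  have hCψ : Tendsto (fun k => C (ψ k)) atTop (nhds D) := hC.comp hψ.tendsto_atTop
  refine ⟨a, mem_of_tendsto_nc hCψ (fun k => hp (ψ k)) ha,
          b, mem_of_tendsto_nc hCψ (fun k => hq (ψ k)) hb, ?_, ?_⟩
  · exact tendsto_nhds_unique (((hf.tendsto _).comp ha)) <| by
      simpa only [Function.comp_def, hfe] using (hf.tendsto _).comp hb
  · exact ge_of_tendsto (ha.dist hb) (Filter.Eventually.of_forall fun k => hd (ψ k))

/-- A compact set is a graph of a homeomorphism iff both coordinate projections are
injective on it. -/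
lemma isHomeoGraph_iff_injOn {C : Set (Hcube × Hcube)} (hC : IsCompact C) :
    IsHomeoGraph C ↔ Set.InjOn Prod.fst C ∧ Set.InjOn Prod.snd C := by
  constructor
  · rintro ⟨K, L, hK, hL, φ, rfl⟩
    constructor
    · rintro _ ⟨k, rfl⟩ _ ⟨k', rfl⟩ h
      have : k = k' := Subtype.ext h
      subst this; rfl
    · rintro _ ⟨k, rfl⟩ _ ⟨k', rfl⟩ h
      have : k = k' := φ.injective (Subtype.ext h)
      subst this; rfl
  · rintro ⟨h1, h2⟩
    refine ⟨Prod.fst '' C, Prod.snd '' C, hC.image continuous_fst, hC.image continuous_snd, ?_⟩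
    haveI : CompactSpace C := isCompact_iff_compactSpace.mp hC
    have bij1 : Function.Bijective
        (fun c : C => (⟨c.1.1, Set.mem_image_of_mem _ c.2⟩ : Prod.fst '' C)) := by
      constructor
      · intro a b hab
        exact Subtype.ext (h1 a.2 b.2 (congrArg Subtype.val hab))
      · rintro ⟨x, c, hc, rfl⟩
        exact ⟨⟨c, hc⟩, rfl⟩
    have bij2 : Function.Bijective
        (fun c : C => (⟨c.1.2, Set.mem_image_of_mem _ c.2⟩ : Prod.snd '' C)) := by
      constructor
      · intro a b hab
        exact Subtype.ext (h2 a.2 b.2 (congrArg Subtype.val hab))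
      · rintro ⟨x, c, hc, rfl⟩
        exact ⟨⟨c, hc⟩, rfl⟩
    have cont1 : Continuous (Equiv.ofBijective _ bij1) :=
      Continuous.subtype_mk (continuous_fst.comp continuous_subtype_val) _
    have cont2 : Continuous (Equiv.ofBijective _ bij2) :=
      Continuous.subtype_mk (continuous_snd.comp continuous_subtype_val) _
    let e1 : C ≃ₜ (Prod.fst '' C : Set Hcube) := cont1.homeoOfEquivCompactToT2
    let e2 : C ≃ₜ (Prod.snd '' C : Set Hcube) := cont2.homeoOfEquivCompactToT2
    refine ⟨e1.symm.trans e2, ?_⟩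
    have he1 : ∀ c : C, ((e1 c : Hcube)) = c.1.1 := fun c => rfl
    have he2 : ∀ c : C, ((e2 c : Hcube)) = c.1.2 := fun c => rfl
    ext x
    constructor
    · intro hx
      refine ⟨e1 ⟨x, hx⟩, ?_⟩
      have hφ : (e1.symm.trans e2) (e1 ⟨x, hx⟩) = e2 ⟨x, hx⟩ := by
        simp [Homeomorph.trans_apply]
      show ((e1 ⟨x, hx⟩ : Hcube), ((e1.symm.trans e2) (e1 ⟨x, hx⟩) : Hcube)) = x
      rw [hφ, he1, he2]
    · rintro ⟨k, rfl⟩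
      have hk : e1 (e1.symm k) = k := e1.apply_symm_apply k
      have : ((k : Hcube), ((e1.symm.trans e2) k : Hcube)) = (e1.symm k : Hcube × Hcube) := by
        rw [← hk]
        simp only [Homeomorph.trans_apply, Homeomorph.symm_apply_apply]
        rw [he1, he2]
      show ((k : Hcube), ((e1.symm.trans e2) k : Hcube)) ∈ C
      rw [this]
      exact (e1.symm k).2

/-- The set of compact subsets of `ℍ × ℍ` that are graphs of homeomorphisms between
compact subsets of `ℍ` is a Borel subset of `K(ℍ²)`. -/
theorem isHomeoGraph_measurableSet :
    MeasurableSet {C : NonemptyCompacts (Hcube × Hcube) |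
      IsHomeoGraph (C : Set (Hcube × Hcube))} := by
  have hset : {C : NonemptyCompacts (Hcube × Hcube) |
      IsHomeoGraph (C : Set (Hcube × Hcube))} =
    (⋃ n : ℕ, {C : NonemptyCompacts (Hcube × Hcube) | ∃ p ∈ (C : Set (Hcube × Hcube)),
        ∃ q ∈ (C : Set (Hcube × Hcube)), p.1 = q.1 ∧ (1 : ℝ) / (n + 1) ≤ dist p q})ᶜ ∩
    (⋃ n : ℕ, {C : NonemptyCompacts (Hcube × Hcube) | ∃ p ∈ (C : Set (Hcube × Hcube)),
        ∃ q ∈ (C : Set (Hcube × Hcube)), p.2 = q.2 ∧ (1 : ℝ) / (n + 1) ≤ dist p q})ᶜ := by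
    ext C
    simp only [Set.mem_setOf_eq, Set.mem_inter_iff, Set.mem_compl_iff]
    rw [isHomeoGraph_iff_injOn C.isCompact]
    constructor
    · rintro ⟨h1, h2⟩
      constructor
      · rintro hmem
        rw [Set.mem_iUnion] at hmem
        obtain ⟨n, p, hp, q, hq, he, hd⟩ := hmem
        have hpq := h1 hp hq he
        subst hpq
        rw [dist_self] at hd
        have hpos : (0 : ℝ) < 1 / (n + 1) := by positivity
        linarith
      · rintro hmem
        rw [Set.mem_iUnion] at hmem
        obtain ⟨n, p, hp, q, hq, he, hd⟩ := hmem
        have hpq := h2 hp hq he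
        subst hpq
        rw [dist_self] at hd
        have hpos : (0 : ℝ) < 1 / (n + 1) := by positivity
        linarith
    · rintro ⟨h1, h2⟩
      constructor
      · intro p hp q hq he
        by_contra hne
        obtain ⟨n, hn⟩ := exists_nat_one_div_lt (dist_pos.mpr hne)
        exact h1 (Set.mem_iUnion.mpr ⟨n, p, hp, q, hq, he, hn.le⟩)
      · intro p hp q hq he
        by_contra hne
        obtain ⟨n, hn⟩ := exists_nat_one_div_lt (dist_pos.mpr hne)
        exact h2 (Set.mem_iUnion.mpr ⟨n, p, hp, q, hq, he, hn.le⟩)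
  rw [hset]
  exact ((MeasurableSet.iUnion fun n =>
      (isClosed_bad Prod.fst continuous_fst _).measurableSet).compl).inter
    ((MeasurableSet.iUnion fun n =>
      (isClosed_bad Prod.snd continuous_snd _).measurableSet).compl)
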